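/- Let A ⊆ {0,1,...,N}^n be finite with combinatorial dimension v(A) = d. Then #A ≤ Σ_{i=0}^{d} C(n,i) N^i. -/

import Mathlib

open Finset

attribute [local instance] Classical.propDecidable

namespace HLAux

variable {n N : ℕ}

/-- The support of a pattern `g`. -/
def supp (g : Fin n → Fin (N + 1)) : Finset (Fin n) :=
  Finset.univ.filter (fun i => g i ≠ 0)

/-- `A` strongly shatters the pattern `g` (support = shattered set, `g i - 1` = threshold). -/
def Shat (A : Finset (Fin n → ℤ)) (g : Fin n → Fin (N + 1)) : Prop :=
  ∀ S ⊆ supp g, ∃ x ∈ A,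
    (∀ i ∈ S, ((g i : ℕ) : ℤ) ≤ x i) ∧ (∀ i ∈ supp g \ S, x i ≤ ((g i : ℕ) : ℤ) - 1)

noncomputable def Str (A : Finset (Fin n → ℤ)) : Finset (Fin n → Fin (N + 1)) :=
  Finset.univ.filter (Shat A)

lemma Shat.mono {A B : Finset (Fin n → ℤ)} (hAB : A ⊆ B) {g : Fin n → Fin (N + 1)}
    (h : Shat A g) : Shat B g := by
  intro S hS
  obtain ⟨x, hx, h1, h2⟩ := h S hS
  exact ⟨x, hAB hx, h1, h2⟩

lemma key : ∀ A : Finset (Fin n → ℤ), (∀ x ∈ A, ∀ i, 0 ≤ x i ∧ x i ≤ (N : ℤ)) →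
    A.card ≤ (Str A : Finset (Fin n → Fin (N + 1))).card := by
  intro A
  induction A using Finset.strongInduction with
  | _ A ih =>
  intro hbd
  rcases A.eq_empty_or_nonempty with rfl | hA
  · simp
  by_cases htwo : ∃ x ∈ A, ∃ y ∈ A, ∃ i, x i ≠ y i
  case neg =>
    -- `A` is a singleton; the zero pattern is shattered.
    push_neg at htwo
    have h1 : A.card ≤ 1 := by
      refine Finset.card_le_one.mpr fun a ha b hb => funext fun i => ?_
      exact htwo a ha b hb i
    have hz : (fun _ => (0 : Fin (N + 1))) ∈ Str A := by
      simp only [Str, mem_filter, mem_univ, true_and]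
      intro S hS
      obtain ⟨x, hx⟩ := hA
      have hsupp : supp (fun _ => (0 : Fin (N + 1))) = (∅ : Finset (Fin n)) := by
        simp [supp]
      refine ⟨x, hx, fun i hi => absurd (hS hi) (by simp [hsupp]), fun i hi => ?_⟩
      rw [hsupp] at hi
      simp at hi
    exact h1.trans (Finset.card_pos.mpr ⟨_, hz⟩)
  obtain ⟨x, hx, y, hy, i, hxi⟩ := htwo
  obtain ⟨u, hu, v, hv, huv⟩ : ∃ u ∈ A, ∃ v ∈ A, u i < v i := by
    rcases lt_or_gt_of_ne hxi with h | h
    · exact ⟨x, hx, y, hy, h⟩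
    · exact ⟨y, hy, x, hx, h⟩
  set t : ℤ := u i with ht
  have ht0 : 0 ≤ t := (hbd u hu i).1
  have htN : t + 1 ≤ (N : ℤ) := le_trans (by omega) (hbd v hv i).2
  have htt : ((t.toNat : ℕ) : ℤ) = t := Int.toNat_of_nonneg ht0
  set ft : Fin (N + 1) := ⟨t.toNat + 1, by omega⟩ with hftdef
  have hft : ((ft : ℕ) : ℤ) = t + 1 := by
    simp only [hftdef]
    push_cast
    omega
  have hft0 : ft ≠ 0 := by
    intro h
    have := congrArg Fin.val h
    simp [hftdef] at this
  set A₁ := A.filter (fun z => z i ≤ t) with hA₁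
  set A₂ := A.filter (fun z => ¬ z i ≤ t) with hA₂
  have hA₁ss : A₁ ⊂ A := Finset.filter_ssubset.mpr ⟨v, hv, by omega⟩
  have hA₂ss : A₂ ⊂ A := Finset.filter_ssubset.mpr ⟨u, hu, by omega⟩
  have hcards : A₁.card + A₂.card = A.card :=
    Finset.card_filter_add_card_filter_not _
  have ih₁ : A₁.card ≤ (Str A₁ : Finset (Fin n → Fin (N + 1))).card :=
    ih A₁ hA₁ss fun z hz => hbd z (Finset.filter_subset _ _ hz)
  have ih₂ : A₂.card ≤ (Str A₂ : Finset (Fin n → Fin (N + 1))).card :=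
    ih A₂ hA₂ss fun z hz => hbd z (Finset.filter_subset _ _ hz)
  -- patterns shattered by both halves have trivial `i`-coordinate
  have hb : ∀ g : Fin n → Fin (N + 1), Shat A₁ g → Shat A₂ g → g i = 0 := by
    intro g h1 h2
    by_contra hgi
    have hi : i ∈ supp g := by simp [supp, hgi]
    obtain ⟨a, ha, ha1, -⟩ := h1 {i} (Finset.singleton_subset_iff.mpr hi)
    obtain ⟨b, hb', -, hb2⟩ := h2 (supp g \ {i}) Finset.sdiff_subset
    have hai := ha1 i (Finset.mem_singleton_self i)
    have hat : a i ≤ t := (Finset.mem_filter.mp ha).2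
    have hbt : ¬ b i ≤ t := (Finset.mem_filter.mp hb').2
    have hbi : b i ≤ ((g i : ℕ) : ℤ) - 1 :=
      hb2 i (by simp [Finset.mem_sdiff, hi])
    omega
  have hsupp : ∀ g : Fin n → Fin (N + 1),
      supp (Function.update g i ft) = insert i (supp g) := by
    intro g
    ext j
    by_cases hj : j = i
    · subst hj; simp [supp, hft0]
    · simp [supp, Function.update_of_ne hj, hj]
  -- the updated pattern is shattered by `A`
  have hc : ∀ g, Shat A₁ g → Shat A₂ g → Shat A (Function.update g i ft) := by
    intro g h1 h2 S hS
    rw [hsupp g] at hS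
    have hgi0 : g i = 0 := hb g h1 h2
    have hiS : i ∉ supp g := by simp [supp, hgi0]
    by_cases hiS' : i ∈ S
    · obtain ⟨a, ha, ha1, ha2⟩ := h2 (S \ {i}) (by
        intro j hj
        rw [Finset.mem_sdiff, Finset.mem_singleton] at hj
        exact (Finset.mem_insert.mp (hS hj.1)).resolve_left hj.2)
      refine ⟨a, Finset.filter_subset _ _ ha, ?_, ?_⟩
      · intro j hj
        by_cases hji : j = i
        · rw [hji, Function.update_self]
          have := (Finset.mem_filter.mp ha).2
          omega
        · rw [Function.update_of_ne hji]
          exact ha1 j (by simp [Finset.mem_sdiff, hj, hji])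
      · intro j hj
        rw [hsupp g, Finset.mem_sdiff, Finset.mem_insert] at hj
        have hji : j ≠ i := by rintro rfl; exact hj.2 hiS'
        rw [Function.update_of_ne hji]
        refine ha2 j ?_
        rw [Finset.mem_sdiff]
        exact ⟨hj.1.resolve_left hji, fun h => hj.2 (Finset.mem_sdiff.mp h).1⟩
    · obtain ⟨a, ha, ha1, ha2⟩ := h1 S (by
        intro j hj
        exact (Finset.mem_insert.mp (hS hj)).resolve_left (by rintro rfl; exact hiS' hj))
      refine ⟨a, Finset.filter_subset _ _ ha, ?_, ?_⟩
      · intro j hj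
        have hji : j ≠ i := by rintro rfl; exact hiS' hj
        rw [Function.update_of_ne hji]
        exact ha1 j hj
      · intro j hj
        rw [hsupp g, Finset.mem_sdiff, Finset.mem_insert] at hj
        by_cases hji : j = i
        · rw [hji, Function.update_self]
          have : a i ≤ t := (Finset.mem_filter.mp ha).2
          omega
        · rw [Function.update_of_ne hji]
          exact ha2 j (Finset.mem_sdiff.mpr ⟨hj.1.resolve_left hji, hj.2⟩)
  -- patterns with value `ft` at `i` are not shattered by either half
  have hd : ∀ g' : Fin n → Fin (N + 1), g' i = ft →
      g' ∉ (Str A₁ ∪ Str A₂ : Finset (Fin n → Fin (N + 1))) := by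
    intro g' hg' hmem
    have hi : i ∈ supp g' := by simp [supp, hg', hft0]
    rcases Finset.mem_union.mp hmem with h | h
    · have h : Shat A₁ g' := (Finset.mem_filter.mp h).2
      obtain ⟨a, ha, ha1, -⟩ := h {i} (Finset.singleton_subset_iff.mpr hi)
      have h1 := ha1 i (Finset.mem_singleton_self i)
      have h2 : a i ≤ t := (Finset.mem_filter.mp ha).2
      rw [hg'] at h1
      omega
    · have h : Shat A₂ g' := (Finset.mem_filter.mp h).2
      obtain ⟨a, ha, -, ha2⟩ := h (supp g' \ {i}) Finset.sdiff_subset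
      have h1 := ha2 i (by simp [Finset.mem_sdiff, hi])
      have h2 : ¬ a i ≤ t := (Finset.mem_filter.mp ha).2
      rw [hg'] at h1
      omega
  set U : Finset (Fin n → Fin (N + 1)) := Str A₁ ∪ Str A₂ with hU
  set W : Finset (Fin n → Fin (N + 1)) :=
    (Str A₁ ∩ Str A₂).image (fun g => Function.update g i ft) with hW
  have hUA : U ⊆ Str A := by
    refine Finset.union_subset ?_ ?_ <;>
    · intro g hg
      rw [Str, Finset.mem_filter] at hg ⊢
      exact ⟨hg.1, hg.2.mono (Finset.filter_subset _ _)⟩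
  have hWA : W ⊆ Str A := by
    intro g' hg'
    obtain ⟨g, hg, rfl⟩ := Finset.mem_image.mp hg'
    rw [Finset.mem_inter, Str, Str, Finset.mem_filter, Finset.mem_filter] at hg
    rw [Str, Finset.mem_filter]
    exact ⟨Finset.mem_univ _, hc g hg.1.2 hg.2.2⟩
  have hdisj : Disjoint U W := by
    rw [Finset.disjoint_right]
    intro g' hg' hU'
    obtain ⟨g, hg, rfl⟩ := Finset.mem_image.mp hg'
    exact hd _ (Function.update_self i ft g) hU'
  have hWcard : W.card = (Str A₁ ∩ Str A₂ : Finset (Fin n → Fin (N + 1))).card := by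
    refine Finset.card_image_of_injOn ?_
    intro g hg g'' hg'' he
    rw [Finset.mem_coe, Finset.mem_inter, Str, Str, Finset.mem_filter, Finset.mem_filter] at hg hg''
    have hg0 : g i = 0 := hb g hg.1.2 hg.2.2
    have hg0' : g'' i = 0 := hb g'' hg''.1.2 hg''.2.2
    funext j
    by_cases hj : j = i
    · subst hj; rw [hg0, hg0']
    · simpa [Function.update_of_ne hj] using congrFun he j
  have hsum : U.card + W.card ≤ (Str A : Finset (Fin n → Fin (N + 1))).card := by
    rw [← Finset.card_union_of_disjoint hdisj]
    exact Finset.card_le_card (Finset.union_subset hUA hWA)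
  have hUW : U.card + (Str A₁ ∩ Str A₂ : Finset (Fin n → Fin (N + 1))).card
      = (Str A₁ : Finset (Fin n → Fin (N + 1))).card + (Str A₂ : Finset (Fin n → Fin (N + 1))).card :=
    Finset.card_union_add_card_inter _ _
  omega

lemma countI (I : Finset (Fin n)) :
    ((Finset.univ : Finset (Fin n → Fin (N + 1))).filter (fun g => supp g = I)).card
      = N ^ I.card := by
  have heq : ((Finset.univ : Finset (Fin n → Fin (N + 1))).filter (fun g => supp g = I))
      = Fintype.piFinset (fun j => if j ∈ I then
          Finset.univ.filter (fun v : Fin (N + 1) => v ≠ 0) else {0}) := by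
    ext g
    simp only [mem_filter, mem_univ, true_and, Fintype.mem_piFinset]
    have hiff : supp g = I ↔ ∀ j, (g j ≠ 0 ↔ j ∈ I) := by
      constructor
      · rintro rfl j; simp [supp]
      · intro h; ext j; simp [supp, h j]
    rw [hiff]
    apply forall_congr'
    intro j
    by_cases hj : j ∈ I <;> simp [hj]
  rw [heq, Fintype.card_piFinset]
  have hcard : ∀ j, ((if j ∈ I then
      Finset.univ.filter (fun v : Fin (N + 1) => v ≠ 0) else {0}).card) = if j ∈ I then N else 1 := by
    intro j
    by_cases hj : j ∈ I <;> simp [hj, Finset.filter_ne']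
  simp only [hcard]
  rw [Finset.prod_ite_mem, Finset.univ_inter, Finset.prod_const]

lemma count (d : ℕ) :
    ((Finset.univ : Finset (Fin n → Fin (N + 1))).filter
        (fun g => (supp g).card ≤ d)).card
      = ∑ i ∈ Finset.range (d + 1), n.choose i * N ^ i := by
  have h1 : (Finset.univ : Finset (Fin n → Fin (N + 1))).filter (fun g => (supp g).card ≤ d)
      = (Finset.range (d + 1)).biUnion
          (fun c => Finset.univ.filter (fun g => (supp g).card = c)) := by
    ext g
    simp only [mem_filter, mem_univ, true_and, mem_biUnion, Finset.mem_range, Nat.lt_succ_iff]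
    constructor
    · intro h; exact ⟨(supp g).card, h, rfl⟩
    · rintro ⟨c, hc, rfl⟩; exact hc
  rw [h1, Finset.card_biUnion]
  · refine Finset.sum_congr rfl fun c _ => ?_
    have h2 : (Finset.univ : Finset (Fin n → Fin (N + 1))).filter (fun g => (supp g).card = c)
        = (Finset.univ.powersetCard c).biUnion
            (fun I => Finset.univ.filter (fun g => supp g = I)) := by
      ext g
      simp only [mem_filter, mem_univ, true_and, mem_biUnion, Finset.mem_powersetCard_univ]
      constructor
      · intro h; exact ⟨supp g, h, rfl⟩
      · rintro ⟨I, hI, rfl⟩; exact hI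
    rw [h2, Finset.card_biUnion]
    · rw [Finset.sum_congr rfl (fun I hI => ?_)]
      · rw [Finset.sum_const, Finset.card_powersetCard, Finset.card_univ, Fintype.card_fin,
          smul_eq_mul]
      · rw [countI, (Finset.mem_powersetCard_univ.mp hI : I.card = c)]
    · intro I hI J hJ hne
      rw [Function.onFun, Finset.disjoint_left]
      intro g hg hg'
      exact hne ((mem_filter.mp hg).2 ▸ (mem_filter.mp hg').2)
  · intro c _ c' _ hne
    rw [Function.onFun, Finset.disjoint_left]
    intro g hg hg'
    exact hne ((mem_filter.mp hg).2 ▸ (mem_filter.mp hg').2)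

end HLAux

/-- A coordinate set `I` is 1-shattered by `A ⊆ ℤ^n`. -/
def ShatteredZ {n : ℕ} (A : Finset (Fin n → ℤ)) (I : Finset (Fin n)) : Prop :=
  ∃ h : Fin n → ℤ, ∀ S ⊆ I, ∃ x ∈ A,
    (∀ i ∈ S, h i + 1 ≤ x i) ∧ (∀ i ∈ I \ S, x i ≤ h i)

/-- **Haussler–Long (Corollary 2.6(ii)).** If `A ⊆ {0,…,N}^n` has
combinatorial dimension at most `d`, then `#A ≤ ∑_{i=0}^d C(n,i) N^i`. -/
theorem haussler_long_uniform (n d N : ℕ) (A : Finset (Fin n → ℤ))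
    (hbd : ∀ x ∈ A, ∀ i, 0 ≤ x i ∧ x i ≤ (N : ℤ))
    (hdim : ∀ I : Finset (Fin n), ShatteredZ A I → I.card ≤ d) :
    A.card ≤ ∑ i ∈ Finset.range (d + 1), n.choose i * N ^ i := by
  have hsub : (HLAux.Str A : Finset (Fin n → Fin (N + 1))) ⊆
      Finset.univ.filter (fun g => (HLAux.supp g).card ≤ d) := by
    intro g hg
    have hsh : ShatteredZ A (HLAux.supp g) := by
      refine ⟨fun j => ((g j : ℕ) : ℤ) - 1, fun S hS => ?_⟩
      obtain ⟨x, hx, h1, h2⟩ := (Finset.mem_filter.mp hg).2 S hS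
      exact ⟨x, hx, fun i hi => by
        have := h1 i hi
        show ((g i : ℕ) : ℤ) - 1 + 1 ≤ x i
        omega, fun i hi => h2 i hi⟩
    simp only [Finset.mem_filter, Finset.mem_univ, true_and]
    exact hdim _ hsh
  calc A.card ≤ (HLAux.Str A : Finset (Fin n → Fin (N + 1))).card := HLAux.key A hbd
    _ ≤ (Finset.univ.filter (fun g : Fin n → Fin (N + 1) => (HLAux.supp g).card ≤ d)).card :=
        Finset.card_le_card hsub
    _ = ∑ i ∈ Finset.range (d + 1), n.choose i * N ^ i := HLAux.count d
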